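/- Let N be a positive integer and K ⊂ ℂ compact. Suppose that for every i ∈ {0, 1, …, N−1} there exist γ_i ∈ ℂ with |γ_i| = 1 and a continuous matrix-valued map 𝒳_i on K such that: X_{nN+i}(z) → 𝒳_i(z) uniformly on K; a_{nN+i−1}/|a_{nN+i−1}| → γ_i; a_{nN+i−1}/a_{(n+1)N+i−1} → 1; for every z ∈ K the matrix 𝒳_i(z) has real entries, is invertible, and discr 𝒳_i(z) < 0; and (X_{nN+i} : n ≥ 1) ∈ D̃₁(K, GL(2, ℂ)). If ∑_{n≥0} 1/|a_n| < ∞, then for every z ∈ K every generalised eigenvector u associated with z satisfies ∑_{n≥0} |u_n|² < ∞ (i.e. u is square-summable). -/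

import Mathlib

open Filter Matrix Topology

noncomputable section

/-- The operator norm of a 2×2 complex matrix (as operator on Euclidean ℂ²). -/
noncomputable def opNorm (X : Matrix (Fin 2) (Fin 2) ℂ) : ℝ :=
  ‖Matrix.toEuclideanCLM (𝕜 := ℂ) X‖

/-- Entrywise complex conjugation of a matrix. -/
def mconj (X : Matrix (Fin 2) (Fin 2) ℂ) : Matrix (Fin 2) (Fin 2) ℂ :=
  X.map (starRingEnd ℂ)

/-- Hermitian symmetrisation. -/
def symQ (X : Matrix (Fin 2) (Fin 2) ℂ) : Matrix (Fin 2) (Fin 2) ℂ :=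
  (2⁻¹ : ℂ) • (X + Xᴴ)

def Ematrix : Matrix (Fin 2) (Fin 2) ℂ := !![0, -1; 1, 0]

/-- One-step transfer matrix `B_j(z)`. -/
def Bmat (a b : ℕ → ℂ) (j : ℕ) (z : ℂ) : Matrix (Fin 2) (Fin 2) ℂ :=
  !![0, 1; -(a (j-1) / a j), (z - b j) / a j]

/-- `N`-step transfer matrix `X_n(z) = B_{n+N-1}(z) ⋯ B_n(z)`. -/
def transfer (a b : ℕ → ℂ) (N n : ℕ) (z : ℂ) : Matrix (Fin 2) (Fin 2) ℂ :=
  (((List.range N).map fun j => Bmat a b (n + j) z).reverse).prod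

/-- Generalised eigenvector associated with `z`. -/
def IsGenEigen (a b : ℕ → ℂ) (z : ℂ) (u : ℕ → ℂ) : Prop :=
  ¬(u 0 = 0 ∧ u 1 = 0) ∧
    ∀ n, 1 ≤ n → z * u n = a n * u (n+1) + b n * u n + a (n-1) * u (n-1)

/-- The twisted Stolz class `D̃₁(K, GL(2,ℂ))`. -/
def MemD1K (K : Set ℂ) (Y : ℕ → ℂ → Matrix (Fin 2) (Fin 2) ℂ) : Prop :=
  (∀ n, 1 ≤ n → ContinuousOn (Y n) K) ∧
  (∀ n, 1 ≤ n → ∀ z ∈ K, IsUnit (Y n z)) ∧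
  (∃ C : ℝ, ∀ n, 1 ≤ n → ∀ z ∈ K, opNorm (Y n z) ≤ C) ∧
  (∃ g : ℕ → ℝ, Summable g ∧ ∀ n, 1 ≤ n → ∀ z ∈ K,
      opNorm (Y (n+1) z - mconj (Y n z)) ≤ g n)

/-- The twisted Stolz class `D̃₁(ℂ)` for scalar sequences `(x_n : n ≥ 1)`. -/
def MemD1 (x : ℕ → ℂ) : Prop :=
  (∃ C : ℝ, ∀ n, 1 ≤ n → ‖x n‖ ≤ C) ∧
    Summable (fun n : ℕ => ‖x (n+2) - (starRingEnd ℂ) (x (n+1))‖)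

def MemD1N (N : ℕ) (x : ℕ → ℂ) : Prop := ∀ i < N, MemD1 (fun n => x (n*N+i))

/-- The quadratic form `v ↦ ⟨M v, v⟩`. -/
def Qform (M : Matrix (Fin 2) (Fin 2) ℂ) (v : Fin 2 → ℂ) : ℂ :=
  dotProduct (star v) (M.mulVec v)

def Qgam (a b : ℕ → ℂ) (N : ℕ) (γ : ℂ) (n : ℕ) (z : ℂ) (v : Fin 2 → ℂ) : ℂ :=
  Qform (symQ ((a (n+N-1) / (γ * (‖a (n+N-1)‖ : ℂ))) • (Ematrix * transfer a b N n z))) v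

def Qtil (a b : ℕ → ℂ) (N : ℕ) (γ : ℂ) (n : ℕ) (z : ℂ) (v : Fin 2 → ℂ) : ℂ :=
  Qform (symQ ((a (n+N-1) / (γ * (‖a (n+N-1)‖ : ℂ)) *
      (starRingEnd ℂ) (a (n+N-1) / a (n-1))) • (Ematrix * mconj (transfer a b N n z)))) v

/-- The `N`-shifted Turán determinant, expressed via a generalised eigenvector `u`. -/
def Sdet (a b : ℕ → ℂ) (N : ℕ) (γ : ℂ) (z : ℂ) (u : ℕ → ℂ) (n : ℕ) : ℂ :=
  (‖a (n+N-1)‖ : ℂ) * Qgam a b N γ n z ![u (n-1), u n]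

/-- Uniform non-degeneracy of a family of quadratic forms. -/
def UnifNonDeg (K : Set ℂ) (Q : ℕ → ℂ → (Fin 2 → ℂ) → ℂ) : Prop :=
  ∃ c₁ > (0:ℝ), ∃ c₂ > (0:ℝ), ∃ M : ℕ, 1 ≤ M ∧
    ∀ v : Fin 2 → ℂ, ∀ z ∈ K, ∀ n, M ≤ n →
      c₁ * (‖v 0‖^2 + ‖v 1‖^2) ≤ ‖Q n z v‖ ∧ ‖Q n z v‖ ≤ c₂ * (‖v 0‖^2 + ‖v 1‖^2)

def RealEntries (X : Matrix (Fin 2) (Fin 2) ℂ) : Prop := ∀ p q, (X p q).im = 0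

def discr (X : Matrix (Fin 2) (Fin 2) ℂ) : ℂ := (Matrix.trace X)^2 - 4 * X.det

/-- Periodic one-step matrix `𝔅_j(x)` (real). -/
def pB (α β : ℤ → ℝ) (j : ℤ) (x : ℝ) : Matrix (Fin 2) (Fin 2) ℝ :=
  !![0, 1; -(α (j-1) / α j), (x - β j) / α j]

/-- Periodic transfer matrix `𝔛_i(x) = 𝔅_{i+N-1}(x) ⋯ 𝔅_i(x)`. -/
def pX (α β : ℤ → ℝ) (N : ℕ) (i : ℤ) (x : ℝ) : Matrix (Fin 2) (Fin 2) ℝ :=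
  (((List.range N).map fun j => pB α β (i + j) x).reverse).prod

/-- The generalised eigenvector with initial data `α`. -/
def gev (a b : ℕ → ℂ) (z : ℂ) (α : Fin 2 → ℂ) : ℕ → ℂ
  | 0 => α 0
  | 1 => α 1
  | n+2 => ((z - b (n+1)) * gev a b z α (n+1) - a n * gev a b z α n) / a (n+1)

end


section AuxProofs

open Filter Matrix Topology

lemma opNorm_nonneg' (M : Matrix (Fin 2) (Fin 2) ℂ) : 0 ≤ opNorm M := norm_nonneg _

lemma entry_le_opNorm (M : Matrix (Fin 2) (Fin 2) ℂ) (p q : Fin 2) : ‖M p q‖ ≤ opNorm M := by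
  have h2 := (Matrix.toEuclideanCLM (𝕜 := ℂ) M).le_opNorm (WithLp.toLp 2 (Pi.single q (1:ℂ)))
  rw [Matrix.toEuclideanCLM_toLp] at h2
  have hx : ‖WithLp.toLp 2 (Pi.single q (1:ℂ) : Fin 2 → ℂ)‖ = 1 := by
    rw [EuclideanSpace.norm_eq]
    fin_cases q <;> simp [Pi.single_apply, Fin.sum_univ_two]
  rw [hx, mul_one] at h2
  refine le_trans ?_ h2
  have := PiLp.norm_apply_le (WithLp.toLp 2 (M *ᵥ Pi.single q (1:ℂ))) p
  simpa using this

lemma transfer_zero (a b : ℕ → ℂ) (n : ℕ) (z : ℂ) : transfer a b 0 n z = 1 := by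
  simp [transfer]

lemma transfer_succ (a b : ℕ → ℂ) (N n : ℕ) (z : ℂ) :
    transfer a b (N+1) n z = Bmat a b (n+N) z * transfer a b N n z := by
  simp [transfer, List.range_succ]

lemma Bmat_mulVec (a b : ℕ → ℂ) (ha : ∀ n, a n ≠ 0) (z : ℂ) (u : ℕ → ℂ)
    (hu : ∀ n, 1 ≤ n → z * u n = a n * u (n+1) + b n * u n + a (n-1) * u (n-1))
    (n : ℕ) (hn : 1 ≤ n) :
    (Bmat a b n z) *ᵥ ![u (n-1), u n] = ![u n, u (n+1)] := by
  funext p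
  fin_cases p
  · simp [Bmat, Matrix.mulVec, dotProduct, Fin.sum_univ_two]
  · have h := hu n hn
    simp only [Bmat, Matrix.mulVec, dotProduct, Fin.sum_univ_two]
    simp only [Matrix.cons_val', Matrix.cons_val_zero, Matrix.cons_val_one, Matrix.head_cons,
      Matrix.head_fin_const, Matrix.empty_val', Matrix.cons_val_fin_one, Fin.mk_one, Matrix.of_apply]
    have hinv : (a n)⁻¹ * a n = 1 := inv_mul_cancel₀ (ha n)
    field_simp
    linear_combination (a n)⁻¹ * h + u (n+1) * hinv

lemma transfer_mulVec (a b : ℕ → ℂ) (ha : ∀ n, a n ≠ 0) (z : ℂ) (u : ℕ → ℂ)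
    (hu : ∀ n, 1 ≤ n → z * u n = a n * u (n+1) + b n * u n + a (n-1) * u (n-1))
    (N : ℕ) :
    ∀ n, 1 ≤ n → (transfer a b N n z) *ᵥ ![u (n-1), u n] = ![u (n+N-1), u (n+N)] := by
  induction N with
  | zero => intro n hn; simp [transfer_zero]
  | succ N ih =>
    intro n hn
    rw [transfer_succ, ← Matrix.mulVec_mulVec, ih n hn]
    have h1 : n + N - 1 = (n + N) - 1 := rfl
    have h2 : u (n + N) = u ((n+N) ) := rfl
    rw [h1]
    have := Bmat_mulVec a b ha z u hu (n+N) (by omega)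
    rw [this]
    have e1 : n + (N+1) - 1 = n + N := by omega
    have e2 : n + (N+1) = n + N + 1 := by omega
    rw [e1, e2]

lemma det_Bmat (a b : ℕ → ℂ) (j : ℕ) (z : ℂ) :
    (Bmat a b j z).det = a (j-1) / a j := by
  simp [Bmat, Matrix.det_fin_two_of]

lemma det_transfer (a b : ℕ → ℂ) (ha : ∀ n, a n ≠ 0) (z : ℂ) (N : ℕ) :
    ∀ n, 1 ≤ n → (transfer a b N n z).det = a (n-1) / a (n+N-1) := by
  induction N with
  | zero => intro n hn; simp [transfer_zero, div_self (ha (n-1))]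
  | succ N ih =>
    intro n hn
    rw [transfer_succ, Matrix.det_mul, det_Bmat, ih n hn]
    have e1 : n + (N+1) - 1 = n + N := by omega
    rw [e1, div_mul_div_comm, mul_comm (a (n+N-1)) (a (n-1))]
    rw [mul_div_mul_right _ _ (ha (n+N-1))]

lemma conjT_E_mconj (X : Matrix (Fin 2) (Fin 2) ℂ) :
    Xᴴ * (Ematrix * mconj X) = (starRingEnd ℂ) X.det • Ematrix := by
  ext p q
  fin_cases p <;> fin_cases q <;>
    simp [Matrix.mul_apply, Fin.sum_univ_two, Ematrix, mconj, Matrix.map_apply,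
      Matrix.conjTranspose_apply, Matrix.vecMul, dotProduct,
      Matrix.det_fin_two, Matrix.smul_apply, smul_eq_mul, _root_.map_mul, map_sub] <;> ring

noncomputable def entsum (Y : Matrix (Fin 2) (Fin 2) ℂ) : ℝ := ‖Y 0 0‖ + ‖Y 0 1‖ + ‖Y 1 0‖ + ‖Y 1 1‖

lemma entsum_nonneg (Y : Matrix (Fin 2) (Fin 2) ℂ) : 0 ≤ entsum Y := by
  unfold entsum; positivity

lemma quad_expand (Y : Matrix (Fin 2) (Fin 2) ℂ) (v : Fin 2 → ℂ) :
    star v ⬝ᵥ (Y *ᵥ v) =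
      (starRingEnd ℂ) (v 0) * (Y 0 0 * v 0) + (starRingEnd ℂ) (v 0) * (Y 0 1 * v 1)
      + ((starRingEnd ℂ) (v 1) * (Y 1 0 * v 0) + (starRingEnd ℂ) (v 1) * (Y 1 1 * v 1)) := by
  simp [dotProduct, Matrix.mulVec, Fin.sum_univ_two, Pi.star_apply, RCLike.star_def]
  ring

lemma quad_abs_le (Y : Matrix (Fin 2) (Fin 2) ℂ) (v : Fin 2 → ℂ) :
    ‖star v ⬝ᵥ (Y *ᵥ v)‖ ≤ entsum Y * (‖v 0‖^2 + ‖v 1‖^2) := by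
  rw [quad_expand]
  have hb : ∀ (p q : Fin 2), ‖(starRingEnd ℂ) (v p) * (Y p q * v q)‖ ≤ ‖Y p q‖ * (‖v 0‖^2 + ‖v 1‖^2) := by
    intro p q
    rw [norm_mul, norm_mul, RCLike.norm_conj]
    have h1 : ‖v p‖ * ‖v q‖ ≤ ‖v 0‖^2 + ‖v 1‖^2 := by
      have hp : ‖v p‖ = ‖v 0‖ ∨ ‖v p‖ = ‖v 1‖ := by fin_cases p <;> simp
      have hq : ‖v q‖ = ‖v 0‖ ∨ ‖v q‖ = ‖v 1‖ := by fin_cases q <;> simp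
      rcases hp with hp | hp <;> rcases hq with hq | hq <;> rw [hp, hq] <;>
        nlinarith [norm_nonneg (v 0), norm_nonneg (v 1), sq_nonneg (‖v 0‖ - ‖v 1‖)]
    calc ‖v p‖ * (‖Y p q‖ * ‖v q‖) = ‖Y p q‖ * (‖v p‖ * ‖v q‖) := by ring
    _ ≤ ‖Y p q‖ * (‖v 0‖^2 + ‖v 1‖^2) := mul_le_mul_of_nonneg_left h1 (norm_nonneg _)
  refine le_trans (norm_add_le _ _) ?_
  refine le_trans (add_le_add (norm_add_le _ _) (norm_add_le _ _)) ?_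
  have := hb 0 0; have := hb 0 1; have := hb 1 0; have := hb 1 1
  unfold entsum
  nlinarith [norm_nonneg (v 0), norm_nonneg (v 1)]

lemma entsum_E_mul (Y : Matrix (Fin 2) (Fin 2) ℂ) : entsum (Ematrix * Y) = entsum Y := by
  unfold entsum
  simp [Matrix.mul_apply, Fin.sum_univ_two, Ematrix]
  ring

lemma quad_pos_aux (α β δ : ℝ) (h : β^2 < α*δ) (hα : 0 < α) :
    ∃ c > 0, ∀ x y t : ℝ, 0 ≤ x → 0 ≤ y → |t| ≤ x*y →
      c*(x^2+y^2) ≤ α*x^2 + 2*β*t + δ*y^2 := by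
  have hδ : 0 < δ := by nlinarith [sq_nonneg β]
  have hsum : 0 < α + δ := by linarith
  refine ⟨(α*δ - β^2)/(α+δ), div_pos (by nlinarith) hsum, ?_⟩
  intro x y t hx hy ht
  set c := (α*δ - β^2)/(α+δ) with hc
  have h1 : c*(α+δ) = α*δ - β^2 := by
    rw [hc, div_mul_cancel₀ _ (ne_of_gt hsum)]
  have hca : (0:ℝ) < α - c := by nlinarith [sq_nonneg β]
  have hcd : (0:ℝ) < δ - c := by nlinarith [sq_nonneg β]
  have h2y : (α-c)*(δ-c)*y^2 = (β^2 + c^2)*y^2 := by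
    have h2 : (α-c)*(δ-c) = β^2 + c^2 := by linear_combination -h1
    rw [h2]
  have ht1 : t ≤ x*y := le_trans (le_abs_self t) ht
  have ht2 : -(x*y) ≤ t := le_trans (neg_le_neg ht) (neg_abs_le t)
  have key : 0 ≤ (α-c)*x^2 + 2*β*t + (δ-c)*y^2 := by
    rcases le_or_gt 0 β with hβ | hβ
    · have hbt : -(2*β*(x*y)) ≤ 2*β*t := by nlinarith
      nlinarith [sq_nonneg ((α-c)*x - β*y), sq_nonneg (c*y), h2y, hca, hbt]
    · have hbt : 2*β*(x*y) ≤ 2*β*t := by nlinarith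
      nlinarith [sq_nonneg ((α-c)*x + β*y), sq_nonneg (c*y), h2y, hca, hbt]
  linarith [key]

lemma quad_pos (α β δ : ℝ) (h : β^2 < α*δ) :
    ∃ c > 0, ∀ x y t : ℝ, 0 ≤ x → 0 ≤ y → |t| ≤ x*y →
      c*(x^2+y^2) ≤ |α*x^2 + 2*β*t + δ*y^2| := by
  rcases lt_or_ge 0 α with hα | hα
  · obtain ⟨c, hc, hq⟩ := quad_pos_aux α β δ h hα
    exact ⟨c, hc, fun x y t hx hy ht => le_trans (hq x y t hx hy ht) (le_abs_self _)⟩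
  · have hα' : 0 < -α := by
      rcases lt_or_eq_of_le hα with h' | h'
      · linarith
      · exfalso; rw [h'] at h; nlinarith [sq_nonneg β]
    obtain ⟨c, hc, hq⟩ := quad_pos_aux (-α) (-β) (-δ) (by nlinarith) hα'
    refine ⟨c, hc, fun x y t hx hy ht => ?_⟩
    have := hq x y t hx hy ht
    calc c*(x^2+y^2) ≤ (-α)*x^2 + 2*(-β)*t + (-δ)*y^2 := this
    _ = -(α*x^2 + 2*β*t + δ*y^2) := by ring
    _ ≤ |α*x^2 + 2*β*t + δ*y^2| := neg_le_abs _

lemma EX_quad_lower (𝒳 : Matrix (Fin 2) (Fin 2) ℂ) (hreal : RealEntries 𝒳)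
    (hd : (_root_.discr 𝒳).re < 0) :
    ∃ c > 0, ∀ v : Fin 2 → ℂ,
      c * (‖v 0‖^2 + ‖v 1‖^2) ≤ |(star v ⬝ᵥ ((Ematrix * 𝒳) *ᵥ v)).re| := by
  set p := (𝒳 0 0).re; set q := (𝒳 0 1).re; set r := (𝒳 1 0).re; set s := (𝒳 1 1).re
  have hdd : (p-s)^2 + 4*q*r < 0 := by
    have : (_root_.discr 𝒳).re = (p+s)^2 - 4*(p*s - q*r) := by
      simp [_root_.discr, Matrix.trace_fin_two, Matrix.det_fin_two, pow_two,
        Complex.mul_re, Complex.add_re, Complex.sub_re, Complex.mul_im, Complex.add_im,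
        Complex.sub_im, Complex.ofReal_re, hreal 0 0, hreal 0 1, hreal 1 0, hreal 1 1]
      rfl
    rw [this] at hd; nlinarith
  have hkey : ((p-s)/2)^2 < (-r)*q := by nlinarith
  obtain ⟨c, hc, hq⟩ := quad_pos (-r) ((p-s)/2) q hkey
  refine ⟨c, hc, fun v => ?_⟩
  have hE : (Ematrix * 𝒳) 0 0 = -𝒳 1 0 ∧ (Ematrix * 𝒳) 0 1 = -𝒳 1 1 ∧
      (Ematrix * 𝒳) 1 0 = 𝒳 0 0 ∧ (Ematrix * 𝒳) 1 1 = 𝒳 0 1 := by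
    refine ⟨?_, ?_, ?_, ?_⟩ <;> simp [Matrix.mul_apply, Fin.sum_univ_two, Ematrix]
  have hQ : (star v ⬝ᵥ ((Ematrix * 𝒳) *ᵥ v)).re
      = (-r)*‖v 0‖^2 + 2*((p-s)/2)*((v 0).re*(v 1).re + (v 0).im*(v 1).im) + q*‖v 1‖^2 := by
    rw [quad_expand, hE.1, hE.2.1, hE.2.2.1, hE.2.2.2]
    have h0 : ‖v 0‖^2 = (v 0).re^2 + (v 0).im^2 := by
      rw [Complex.sq_norm, Complex.normSq_apply]; ring
    have h1 : ‖v 1‖^2 = (v 1).re^2 + (v 1).im^2 := by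
      rw [Complex.sq_norm, Complex.normSq_apply]; ring
    rw [h0, h1]
    simp [Complex.add_re, Complex.mul_re, Complex.mul_im, Complex.neg_re, Complex.neg_im,
      Complex.conj_re, Complex.conj_im, hreal 0 0, hreal 0 1, hreal 1 0, hreal 1 1]
    ring
  rw [hQ]
  apply hq _ _ _ (norm_nonneg _) (norm_nonneg _)
  have : (v 0).re*(v 1).re + (v 0).im*(v 1).im = ((starRingEnd ℂ) (v 0) * v 1).re := by
    simp [Complex.mul_re, Complex.conj_re, Complex.conj_im]
  rw [this]
  calc |((starRingEnd ℂ) (v 0) * v 1).re| ≤ ‖(starRingEnd ℂ) (v 0) * v 1‖ := Complex.abs_re_le_norm _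
  _ = ‖v 0‖ * ‖v 1‖ := by rw [norm_mul, RCLike.norm_conj]

lemma lower_transfer (c : ℝ) (hc : 0 < c) (𝒴 : Matrix (Fin 2) (Fin 2) ℂ)
    (hq : ∀ v : Fin 2 → ℂ, c * (‖v 0‖^2 + ‖v 1‖^2) ≤ |(star v ⬝ᵥ (𝒴 *ᵥ v)).re|)
    (Y : Matrix (Fin 2) (Fin 2) ℂ) (e : ℂ) (he : ‖e‖ = 1)
    (hsmall : entsum (e • Y - 𝒴) ≤ c/2) (v : Fin 2 → ℂ) :
    (c/2) * (‖v 0‖^2 + ‖v 1‖^2) ≤ ‖star v ⬝ᵥ (Y *ᵥ v)‖ := by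
  have hsplit : star v ⬝ᵥ ((e • Y) *ᵥ v) = star v ⬝ᵥ (𝒴 *ᵥ v) + star v ⬝ᵥ ((e • Y - 𝒴) *ᵥ v) := by
    have hm : e • Y = 𝒴 + (e • Y - 𝒴) := by abel
    conv_lhs => rw [hm]
    rw [Matrix.add_mulVec, dotProduct_add]
  have h1 : ‖star v ⬝ᵥ ((e • Y) *ᵥ v)‖ = ‖star v ⬝ᵥ (Y *ᵥ v)‖ := by
    rw [Matrix.smul_mulVec, dotProduct_smul, smul_eq_mul, norm_mul, he, one_mul]
  have h2 : |(star v ⬝ᵥ (𝒴 *ᵥ v)).re| ≤ ‖star v ⬝ᵥ ((e • Y) *ᵥ v)‖ + ‖star v ⬝ᵥ ((e • Y - 𝒴) *ᵥ v)‖ := by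
    calc |(star v ⬝ᵥ (𝒴 *ᵥ v)).re| ≤ ‖star v ⬝ᵥ (𝒴 *ᵥ v)‖ := by
          exact Complex.abs_re_le_norm _
    _ = ‖star v ⬝ᵥ ((e • Y) *ᵥ v) - star v ⬝ᵥ ((e • Y - 𝒴) *ᵥ v)‖ := by rw [hsplit]; congr 1; ring
    _ ≤ _ := norm_sub_le _ _
  have h3 := quad_abs_le (e • Y - 𝒴) v
  have h4 := hq v
  have h5 : entsum (e • Y - 𝒴) * (‖v 0‖^2 + ‖v 1‖^2) ≤ (c/2) * (‖v 0‖^2 + ‖v 1‖^2) := by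
    apply mul_le_mul_of_nonneg_right hsmall
    positivity
  rw [h1] at h2
  linarith

lemma F_step (X X' : Matrix (Fin 2) (Fin 2) ℂ) (w : Fin 2 → ℂ) :
    star (X *ᵥ w) ⬝ᵥ ((Ematrix * X') *ᵥ (X *ᵥ w))
      = (starRingEnd ℂ) X.det * (star w ⬝ᵥ ((Ematrix * X) *ᵥ w))
        + star (X *ᵥ w) ⬝ᵥ ((Ematrix * (X' - mconj X)) *ᵥ (X *ᵥ w)) := by
  have hm : Ematrix * X' = Ematrix * mconj X + Ematrix * (X' - mconj X) := by
    rw [← Matrix.mul_add]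
    congr 1
    abel
  rw [hm, Matrix.add_mulVec, dotProduct_add]
  congr 1
  rw [Matrix.star_mulVec, ← dotProduct_mulVec, Matrix.mulVec_mulVec, Matrix.mulVec_mulVec,
    conjT_E_mconj, Matrix.smul_mul, Matrix.smul_mulVec,
    dotProduct_smul, smul_eq_mul]

lemma prod_bound (h : ℕ → ℝ) (hh0 : ∀ m, 0 ≤ h m) (hhs : Summable h)
    (G : ℕ → ℝ) (hG : ∀ m, 0 ≤ G m) (M : ℕ)
    (hrec : ∀ m, M ≤ m → G (m+1) ≤ G m * (1 + h m)) :
    ∃ D : ℝ, ∀ m, M ≤ m → G m ≤ D := by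
  refine ⟨G M * Real.exp (∑' k, h k), ?_⟩
  have key : ∀ m, M ≤ m → G m ≤ G M * Real.exp (∑ k ∈ Finset.Ico M m, h k) := by
    intro m hm
    induction m, hm using Nat.le_induction with
    | base => simp
    | succ m hm ih =>
      calc G (m+1) ≤ G m * (1 + h m) := hrec m hm
      _ ≤ (G M * Real.exp (∑ k ∈ Finset.Ico M m, h k)) * (1 + h m) := by
          apply mul_le_mul_of_nonneg_right ih
          linarith [hh0 m]
      _ ≤ (G M * Real.exp (∑ k ∈ Finset.Ico M m, h k)) * Real.exp (h m) := by
          apply mul_le_mul_of_nonneg_left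
          · calc (1:ℝ) + h m = h m + 1 := by ring
            _ ≤ Real.exp (h m) := Real.add_one_le_exp (h m)
          · exact mul_nonneg (hG M) (Real.exp_nonneg _)
      _ = G M * Real.exp (∑ k ∈ Finset.Ico M (m+1), h k) := by
          rw [Finset.sum_Ico_succ_top hm, mul_assoc, ← Real.exp_add]
  intro m hm
  refine (key m hm).trans ?_
  apply mul_le_mul_of_nonneg_left _ (hG M)
  apply Real.exp_le_exp.mpr
  exact Summable.sum_le_tsum _ (fun i _ => hh0 i) hhs

lemma key_residue
    (a b : ℕ → ℂ) (ha : ∀ n, a n ≠ 0) (N : ℕ) (hN : 1 ≤ N) (z : ℂ) (u : ℕ → ℂ)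
    (hu : ∀ n, 1 ≤ n → z * u n = a n * u (n+1) + b n * u n + a (n-1) * u (n-1))
    (i : ℕ) (hi : i < N) (γ : ℂ) (hγ : ‖γ‖ = 1) (𝒳 : Matrix (Fin 2) (Fin 2) ℂ)
    (hconv : ∀ ε > (0:ℝ), ∃ M : ℕ, ∀ m, M ≤ m → opNorm (transfer a b N (m*N+i) z - 𝒳) < ε)
    (hγm : Tendsto (fun m : ℕ => a (m*N+i-1) / (‖a (m*N+i-1)‖ : ℂ)) atTop (𝓝 γ))
    (hreal : RealEntries 𝒳) (hdisc : (_root_.discr 𝒳).re < 0)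
    (g : ℕ → ℝ) (hg : Summable g)
    (hgb : ∀ m, 1 ≤ m →
      opNorm (transfer a b N ((m+1)*N+i) z - mconj (transfer a b N (m*N+i) z)) ≤ g m) :
    ∃ D : ℝ, ∃ M₀ : ℕ, 1 ≤ M₀ ∧ ∀ m, M₀ ≤ m → ‖u (m*N+i)‖^2 ≤ D / ‖a (m*N+i-1)‖ := by
  classical
  set X : ℕ → Matrix (Fin 2) (Fin 2) ℂ := fun m => transfer a b N (m*N+i) z with hX
  set w : ℕ → (Fin 2 → ℂ) := fun m => ![u (m*N+i-1), u (m*N+i)] with hwdef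
  set F : ℕ → ℂ := fun m => star (w m) ⬝ᵥ ((Ematrix * X m) *ᵥ (w m)) with hF
  have htendX : ∀ p q : Fin 2, Tendsto (fun m => X m p q) atTop (𝓝 (𝒳 p q)) := by
    intro p q
    rw [Metric.tendsto_atTop]
    intro ε hε
    obtain ⟨M, hM⟩ := hconv ε hε
    refine ⟨M, fun m hm => ?_⟩
    have h1 : dist (X m p q) (𝒳 p q) = ‖(X m - 𝒳) p q‖ := by
      simp [dist_eq_norm, Matrix.sub_apply]
    rw [h1]
    exact lt_of_le_of_lt (entry_le_opNorm _ p q) (hM m hm)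
  set cm : ℕ → ℂ := fun m => (a (m*N+i-1) / (‖a (m*N+i-1)‖ : ℂ)) * (starRingEnd ℂ) γ with hcm
  have hcm_unit : ∀ m, ‖cm m‖ = 1 := by
    intro m
    have hnz := ha (m*N+i-1)
    have hna : ‖a (m*N+i-1)‖ ≠ 0 := norm_ne_zero_iff.mpr hnz
    have h1 : ‖a (m*N+i-1) / (‖a (m*N+i-1)‖ : ℂ)‖ = 1 := by
      rw [norm_div, Complex.norm_real, Real.norm_eq_abs, abs_of_nonneg (norm_nonneg _),
        div_self hna]
    show ‖(a (m*N+i-1) / (‖a (m*N+i-1)‖ : ℂ)) * (starRingEnd ℂ) γ‖ = 1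
    rw [norm_mul, h1, RCLike.norm_conj, hγ, one_mul]
  have hcm_tend : Tendsto cm atTop (𝓝 1) := by
    have h2 := hγm.mul (tendsto_const_nhds (x := (starRingEnd ℂ) γ))
    have hγγ : γ * (starRingEnd ℂ) γ = 1 := by
      rw [Complex.mul_conj]
      norm_cast
      rw [Complex.normSq_eq_norm_sq, hγ, one_pow]
    rw [hγγ] at h2
    exact h2
  obtain ⟨c, hc, hq⟩ := EX_quad_lower 𝒳 hreal hdisc
  have htendD : Tendsto (fun m => entsum (cm m • (Ematrix * X m) - Ematrix * 𝒳)) atTop (𝓝 0) := by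
    have hent : ∀ p q : Fin 2,
        Tendsto (fun m => ‖(cm m • (Ematrix * X m) - Ematrix * 𝒳) p q‖) atTop (𝓝 0) := by
      intro p q
      have hEX : Tendsto (fun m => (Ematrix * X m) p q) atTop (𝓝 ((Ematrix * 𝒳) p q)) := by
        simp only [Matrix.mul_apply, Fin.sum_univ_two]
        exact ((tendsto_const_nhds.mul (htendX 0 q)).add (tendsto_const_nhds.mul (htendX 1 q)))
      have htt : Tendsto (fun m => (cm m • (Ematrix * X m) - Ematrix * 𝒳) p q) atTop
          (𝓝 (1 * ((Ematrix * 𝒳) p q) - (Ematrix * 𝒳) p q)) := by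
        simp only [Matrix.sub_apply, Matrix.smul_apply, smul_eq_mul]
        exact Tendsto.sub (hcm_tend.mul hEX) tendsto_const_nhds
      rw [one_mul, sub_self] at htt
      simpa using htt.norm
    have h4 : Tendsto (fun m => ‖(cm m • (Ematrix * X m) - Ematrix * 𝒳) 0 0‖
        + ‖(cm m • (Ematrix * X m) - Ematrix * 𝒳) 0 1‖
        + ‖(cm m • (Ematrix * X m) - Ematrix * 𝒳) 1 0‖
        + ‖(cm m • (Ematrix * X m) - Ematrix * 𝒳) 1 1‖) atTop (𝓝 (0+0+0+0)) :=
      (((hent 0 0).add (hent 0 1)).add (hent 1 0)).add (hent 1 1)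
    simpa [entsum] using h4
  have hev : ∀ᶠ m in atTop, entsum (cm m • (Ematrix * X m) - Ematrix * 𝒳) ≤ c/2 :=
    htendD.eventually (eventually_le_nhds (show (0:ℝ) < c/2 by linarith))
  obtain ⟨MA, hMA⟩ := eventually_atTop.mp hev
  have hlow : ∀ m, MA ≤ m → ∀ v : Fin 2 → ℂ,
      (c/2) * (‖v 0‖^2 + ‖v 1‖^2) ≤ ‖star v ⬝ᵥ ((Ematrix * X m) *ᵥ v)‖ :=
    fun m hm v => lower_transfer c hc (Ematrix * 𝒳) hq (Ematrix * X m) (cm m)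
      (hcm_unit m) (hMA m hm) v
  have hidx : ∀ m : ℕ, (m+1)*N+i-1 = m*N+i+N-1 := by
    intro m
    have h : (m+1)*N+i = m*N+i+N := by ring
    exact congrArg (fun t => t - 1) h
  have hidx2 : ∀ m : ℕ, (m+1)*N+i = m*N+i+N := fun m => by ring
  have hn1 : ∀ m : ℕ, 1 ≤ m → 1 ≤ m*N+i := by
    intro m hm
    have := Nat.mul_le_mul hm hN
    omega
  have hw1 : ∀ m, 1 ≤ m → w (m+1) = (X m) *ᵥ (w m) := by
    intro m hm
    have h := transfer_mulVec a b ha z u hu N (m*N+i) (hn1 m hm)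
    show (![u ((m+1)*N+i-1), u ((m+1)*N+i)] : Fin 2 → ℂ) = (X m) *ᵥ (w m)
    rw [hidx m, hidx2 m]
    exact h.symm
  set R : ℕ → ℂ := fun m =>
    star (w (m+1)) ⬝ᵥ ((Ematrix * (X (m+1) - mconj (X m))) *ᵥ (w (m+1))) with hR
  have hFrec : ∀ m, 1 ≤ m → F (m+1) = (starRingEnd ℂ) ((X m).det) * F m + R m := by
    intro m hm
    have hstep := F_step (X m) (X (m+1)) (w m)
    calc F (m+1) = star (w (m+1)) ⬝ᵥ ((Ematrix * X (m+1)) *ᵥ (w (m+1))) := rfl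
    _ = star (X m *ᵥ w m) ⬝ᵥ ((Ematrix * X (m+1)) *ᵥ (X m *ᵥ w m)) := by rw [hw1 m hm]
    _ = (starRingEnd ℂ) ((X m).det) * (star (w m) ⬝ᵥ ((Ematrix * X m) *ᵥ (w m)))
        + star (X m *ᵥ w m) ⬝ᵥ ((Ematrix * (X (m+1) - mconj (X m))) *ᵥ (X m *ᵥ w m)) := hstep
    _ = (starRingEnd ℂ) ((X m).det) * F m + R m := by rw [← hw1 m hm]
  set G : ℕ → ℂ := fun m => (starRingEnd ℂ) (a (m*N+i-1)) * F m with hGdef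
  have hGrec : ∀ m, 1 ≤ m → G (m+1) = G m + (starRingEnd ℂ) (a (m*N+i+N-1)) * R m := by
    intro m hm
    have hdet := det_transfer a b ha z N (m*N+i) (hn1 m hm)
    have hdet2 : (starRingEnd ℂ) (a (m*N+i+N-1)) * (starRingEnd ℂ) ((X m).det)
        = (starRingEnd ℂ) (a (m*N+i-1)) := by
      rw [← _root_.map_mul]
      congr 1
      rw [hdet, mul_comm, div_mul_cancel₀ _ (ha (m*N+i+N-1))]
    calc G (m+1) = (starRingEnd ℂ) (a ((m+1)*N+i-1)) * F (m+1) := rfl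
    _ = (starRingEnd ℂ) (a (m*N+i+N-1)) * F (m+1) := by rw [hidx m]
    _ = (starRingEnd ℂ) (a (m*N+i+N-1)) * ((starRingEnd ℂ) ((X m).det) * F m + R m) := by
        rw [hFrec m hm]
    _ = ((starRingEnd ℂ) (a (m*N+i+N-1)) * (starRingEnd ℂ) ((X m).det)) * F m
        + (starRingEnd ℂ) (a (m*N+i+N-1)) * R m := by ring
    _ = G m + (starRingEnd ℂ) (a (m*N+i+N-1)) * R m := by rw [hdet2]
  have hRbound : ∀ m, 1 ≤ m → ‖R m‖ ≤ 4 * g m * (‖w (m+1) 0‖^2 + ‖w (m+1) 1‖^2) := by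
    intro m hm
    have h1 := quad_abs_le (Ematrix * (X (m+1) - mconj (X m))) (w (m+1))
    have h2 : entsum (Ematrix * (X (m+1) - mconj (X m))) ≤ 4 * g m := by
      rw [entsum_E_mul]
      have hb : ∀ p q : Fin 2, ‖(X (m+1) - mconj (X m)) p q‖ ≤ g m := by
        intro p q
        exact le_trans (entry_le_opNorm _ p q) (hgb m hm)
      unfold entsum
      have := hb 0 0; have := hb 0 1; have := hb 1 0; have := hb 1 1
      linarith
    refine le_trans h1 ?_
    apply mul_le_mul_of_nonneg_right h2
    positivity
  have hg0 : ∀ m, 1 ≤ m → 0 ≤ g m := by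
    intro m hm
    exact le_trans (norm_nonneg _) (hgb m hm)
  have hGnorm : ∀ m, ‖G m‖ = ‖a (m*N+i-1)‖ * ‖F m‖ := by
    intro m
    show ‖(starRingEnd ℂ) (a (m*N+i-1)) * F m‖ = _
    rw [norm_mul, RCLike.norm_conj]
  have hGlow : ∀ m, MA ≤ m →
      (c/2) * (‖a (m*N+i-1)‖ * (‖w m 0‖^2 + ‖w m 1‖^2)) ≤ ‖G m‖ := by
    intro m hm
    rw [hGnorm m]
    have h6 := hlow m hm (w m)
    calc (c/2) * (‖a (m*N+i-1)‖ * (‖w m 0‖^2 + ‖w m 1‖^2))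
        = ‖a (m*N+i-1)‖ * ((c/2) * (‖w m 0‖^2 + ‖w m 1‖^2)) := by ring
    _ ≤ ‖a (m*N+i-1)‖ * ‖F m‖ := mul_le_mul_of_nonneg_left h6 (norm_nonneg _)
  have hgsmall : ∀ᶠ m in atTop, g m < c/16 :=
    hg.tendsto_atTop_zero.eventually (eventually_lt_nhds (show (0:ℝ) < c/16 by linarith))
  obtain ⟨MB, hMB⟩ := eventually_atTop.mp hgsmall
  set M1 := max (max 1 MA) MB with hM1
  have hrec : ∀ m, M1 ≤ m → ‖G (m+1)‖ ≤ ‖G m‖ * (1 + (16/c) * |g m|) := by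
    intro m hm
    have hm1 : 1 ≤ m := le_trans (le_trans (le_max_left 1 MA) (le_max_left _ MB)) hm
    have hmA : MA ≤ m := le_trans (le_trans (le_max_right 1 MA) (le_max_left _ MB)) hm
    have hmB : MB ≤ m := le_trans (le_max_right _ MB) hm
    have hRb := hRbound m hm1
    have h1 : ‖G (m+1)‖ ≤ ‖G m‖
        + ‖a (m*N+i+N-1)‖ * (4 * g m * (‖w (m+1) 0‖^2 + ‖w (m+1) 1‖^2)) := by
      rw [hGrec m hm1]
      refine le_trans (norm_add_le _ _) ?_
      have h2 : ‖(starRingEnd ℂ) (a (m*N+i+N-1)) * R m‖ = ‖a (m*N+i+N-1)‖ * ‖R m‖ := by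
        rw [norm_mul, RCLike.norm_conj]
      rw [h2]
      have h2b := mul_le_mul_of_nonneg_left hRb (norm_nonneg (a (m*N+i+N-1)))
      linarith
    have h3 : ‖a (m*N+i+N-1)‖ * (‖w (m+1) 0‖^2 + ‖w (m+1) 1‖^2) ≤ (2/c) * ‖G (m+1)‖ := by
      have hgl := hGlow (m+1) (le_trans hmA (Nat.le_succ m))
      rw [hidx m] at hgl
      calc ‖a (m*N+i+N-1)‖ * (‖w (m+1) 0‖^2 + ‖w (m+1) 1‖^2)
          = (2/c) * ((c/2) * (‖a (m*N+i+N-1)‖ * (‖w (m+1) 0‖^2 + ‖w (m+1) 1‖^2))) := by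
            field_simp
      _ ≤ (2/c) * ‖G (m+1)‖ := by
            apply mul_le_mul_of_nonneg_left hgl
            positivity
    have hgm := hMB m hmB
    have hgm0 := hg0 m hm1
    have habs : |g m| = g m := abs_of_nonneg hgm0
    rw [habs]
    have h5 : ‖G (m+1)‖ ≤ ‖G m‖ + (8*g m/c) * ‖G (m+1)‖ := by
      have h4 := mul_le_mul_of_nonneg_left h3 (mul_nonneg (by norm_num : (0:ℝ) ≤ 4) hgm0)
      calc ‖G (m+1)‖ ≤ ‖G m‖
          + ‖a (m*N+i+N-1)‖ * (4 * g m * (‖w (m+1) 0‖^2 + ‖w (m+1) 1‖^2)) := h1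
      _ = ‖G m‖ + (4*g m) * (‖a (m*N+i+N-1)‖ * (‖w (m+1) 0‖^2 + ‖w (m+1) 1‖^2)) := by ring
      _ ≤ ‖G m‖ + (4*g m) * ((2/c) * ‖G (m+1)‖) := by linarith
      _ = ‖G m‖ + (8*g m/c) * ‖G (m+1)‖ := by ring
    have hfrac : 8*g m/c ≤ 1/2 := by
      rw [div_le_iff₀ hc]
      nlinarith
    have hfrac0 : 0 ≤ 8*g m/c := div_nonneg (by linarith) (le_of_lt hc)
    have h6 : ‖G (m+1)‖ ≤ 2*‖G m‖ := by
      have h6a := mul_le_mul_of_nonneg_right hfrac (norm_nonneg (G (m+1)))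
      linarith
    have h7 := mul_le_mul_of_nonneg_left h6 hfrac0
    calc ‖G (m+1)‖ ≤ ‖G m‖ + (8*g m/c) * ‖G (m+1)‖ := h5
    _ ≤ ‖G m‖ + (8*g m/c) * (2*‖G m‖) := by linarith
    _ = ‖G m‖ * (1 + 16/c * g m) := by ring
  have hsumh : Summable (fun m => (16/c) * |g m|) := hg.abs.mul_left (16/c)
  obtain ⟨D0, hD0⟩ := prod_bound (fun m => (16/c) * |g m|)
    (fun m => by positivity) hsumh (fun m => ‖G m‖) (fun m => norm_nonneg _) M1 hrec
  refine ⟨2*D0/c, max M1 1, le_max_right _ _, ?_⟩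
  intro m hm
  have hmM1 : M1 ≤ m := le_trans (le_max_left _ _) hm
  have hmA : MA ≤ m := le_trans (le_trans (le_max_right 1 MA) (le_max_left _ MB)) hmM1
  have hich := hGlow m hmA
  have hDm := hD0 m hmM1
  have hna : (0:ℝ) < ‖a (m*N+i-1)‖ := norm_pos_iff.mpr (ha _)
  have hw1' : ‖u (m*N+i)‖^2 ≤ ‖w m 0‖^2 + ‖w m 1‖^2 := by
    have hwm : w m 1 = u (m*N+i) := rfl
    rw [← hwm]
    nlinarith [sq_nonneg ‖w m 0‖]
  rw [le_div_iff₀ hna, le_div_iff₀ hc]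
  have hcomb : (c/2) * (‖a (m*N+i-1)‖ * (‖w m 0‖^2 + ‖w m 1‖^2)) ≤ D0 := le_trans hich hDm
  nlinarith [hcomb, mul_le_mul_of_nonneg_right hw1' (le_of_lt hna), hna, hc,
    sq_nonneg ‖w m 0‖, sq_nonneg ‖w m 1‖]

end AuxProofs

open Filter Matrix Topology in
/-- Theorem B, second part: if ∑ 1/|aₙ| < ∞ and the hypotheses hold for every i,
every generalised eigenvector is square-summable. -/
theorem statement2
    (a b : ℕ → ℂ) (ha : ∀ n, a n ≠ 0)
    (N : ℕ) (hN : 1 ≤ N)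
    (K : Set ℂ) (hK : IsCompact K)
    (hyp : ∀ i < N, ∃ γ : ℂ, ‖γ‖ = 1 ∧ ∃ 𝒳 : ℂ → Matrix (Fin 2) (Fin 2) ℂ,
      ContinuousOn 𝒳 K ∧
      (∀ ε > (0:ℝ), ∃ M : ℕ, ∀ n, M ≤ n → ∀ z ∈ K,
        opNorm (transfer a b N (n*N+i) z - 𝒳 z) < ε) ∧
      Tendsto (fun n : ℕ => a (n*N+i-1) / (‖a (n*N+i-1)‖ : ℂ)) atTop (𝓝 γ) ∧
      Tendsto (fun n : ℕ => a (n*N+i-1) / a ((n+1)*N+i-1)) atTop (𝓝 1) ∧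
      (∀ z ∈ K, RealEntries (𝒳 z) ∧ IsUnit (𝒳 z) ∧ (_root_.discr (𝒳 z)).re < 0) ∧
      MemD1K K (fun n z => transfer a b N (n*N+i) z))
    (hsum : Summable (fun n : ℕ => 1 / ‖a n‖)) :
    ∀ z ∈ K, ∀ u : ℕ → ℂ, IsGenEigen a b z u → Summable (fun n : ℕ => ‖u n‖^2) := by
  intro z hz u hgen
  have hu := hgen.2
  -- per-residue summability
  have hres : ∀ i, i < N → Summable (fun m : ℕ => ‖u (m*N+i)‖^2) := by
    intro i hi
    obtain ⟨γ, hγ, 𝒳, hcont, hconvK, hγm, _hratio, hprops, hD1⟩ := hyp i hi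
    obtain ⟨g, hgsum, hgb⟩ := hD1.2.2.2
    have hconv : ∀ ε > (0:ℝ), ∃ M : ℕ, ∀ m, M ≤ m →
        opNorm (transfer a b N (m*N+i) z - 𝒳 z) < ε := by
      intro ε hε
      obtain ⟨M, hM⟩ := hconvK ε hε
      exact ⟨M, fun m hm => hM m hm z hz⟩
    obtain ⟨hre, _hunit, hdisc⟩ := hprops z hz
    obtain ⟨D, M₀, hM₀1, hbound⟩ := key_residue a b ha N hN z u hu i hi γ hγ (𝒳 z)
      hconv hγm hre hdisc g hgsum (fun m hm => hgb m hm z hz)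
    -- comparison
    have hinj : Function.Injective (fun m : ℕ => (m+M₀)*N+i-1) := by
      have hmono : StrictMono (fun m : ℕ => (m+M₀)*N+i-1) := by
        apply strictMono_nat_of_lt_succ
        intro m
        have h1 : (m+M₀)*N = m*N + M₀*N := by ring
        have h2 : (m+1+M₀)*N = m*N + M₀*N + N := by ring
        have h3 : 1 ≤ M₀*N := Nat.one_le_iff_ne_zero.mpr (by positivity)
        simp only [h1, h2]
        omega
      exact hmono.injective
    have hsum2 : Summable (fun m : ℕ => D * (1/‖a ((m+M₀)*N+i-1)‖)) := by
      apply Summable.mul_left D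
      exact hsum.comp_injective hinj
    have hcomp : Summable (fun m : ℕ => ‖u ((m+M₀)*N+i)‖^2) := by
      apply Summable.of_nonneg_of_le (fun m => sq_nonneg _) _ hsum2
      intro m
      have := hbound (m+M₀) (Nat.le_add_left M₀ m)
      calc ‖u ((m+M₀)*N+i)‖^2 ≤ D / ‖a ((m+M₀)*N+i-1)‖ := this
      _ = D * (1/‖a ((m+M₀)*N+i-1)‖) := by rw [div_eq_mul_one_div]
    exact (summable_nat_add_iff M₀).mp hcomp
  -- combine residues
  have hNZ : NeZero N := ⟨by omega⟩
  rw [← (Nat.divModEquiv N).symm.summable_iff]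
  have hval : ∀ p : ℕ × Fin N,
      ((fun n : ℕ => ‖u n‖^2) ∘ (Nat.divModEquiv N).symm) p = ‖u (p.1*N+(p.2:ℕ))‖^2 := by
    intro p; rfl
  rw [summable_congr hval]
  apply (summable_prod_of_nonneg (fun p => sq_nonneg _)).mpr
  constructor
  · intro m
    exact Summable.of_finite
  · have : ∀ m : ℕ, (∑' j : Fin N, ‖u (m*N+(j:ℕ))‖^2) = ∑ j : Fin N, ‖u (m*N+(j:ℕ))‖^2 :=
      fun m => tsum_fintype _
    rw [summable_congr this]
    apply summable_sum
    intro j _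
    exact hres j j.2
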